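/- Let G be a finite connected simple graph, let σ be an automorphism of G, and let F be a subset of V(G) such that the five sets F, σ(F), σ²(F), σ³(F), σ⁴(F) form a partition of V(G). Set A₂ = F ∪ σ(F) and A₃ = F ∪ σ(F) ∪ σ²(F), and assume the induced subgraphs H₂ = ⟨A₂⟩_G and H₃ = ⟨A₃⟩_G are connected and isometric in G (i.e., d_{H_j}(u,v) = d_G(u,v) for all u, v in A_j). Then for every natural number λ ≥ 1, W_λ(G) = 5·(W_λ(H₃) − W_λ(H₂)). -/

import Mathlib

/-- The λ-Wiener index of a graph: `W_λ(G) = Σ_{{u,v}} d_G(u,v)^λ`, the sum running over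
all unordered pairs of distinct vertices. -/
noncomputable def wienerL {V : Type*} [Fintype V] [DecidableEq V]
    (G : SimpleGraph V) (l : ℕ) : ℕ :=
  ∑ p ∈ Finset.univ.filter (fun p : Sym2 V => ¬ p.IsDiag),
    Sym2.lift ⟨fun u v => G.dist u v ^ l, fun u v => by simp [SimpleGraph.dist_comm]⟩ p

/-- Doubling lemma: twice the sum over unordered non-diagonal pairs equals the full
ordered double sum, for a symmetric function vanishing on the diagonal. -/
lemma double_sum {V : Type*} [Fintype V] [DecidableEq V]
    (f : V → V → ℕ) (hs : ∀ u v, f u v = f v u) (hd : ∀ u, f u u = 0) :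
    2 * ∑ p ∈ Finset.univ.filter (fun p : Sym2 V => ¬ p.IsDiag),
        Sym2.lift ⟨f, hs⟩ p = ∑ u, ∑ v, f u v := by
  letI : LinearOrder V := LinearOrder.lift' (Fintype.equivFin V) (Fintype.equivFin V).injective
  have h1 : (Finset.univ.filter (fun p : Sym2 V => ¬ p.IsDiag))
      = Finset.univ.sym2.filter (fun p : Sym2 V => ¬ p.IsDiag) := by
    rw [Finset.sym2_univ]
  rw [h1]
  have key := Finset.sum_sym2_filter_not_isDiag (Finset.univ : Finset V) (Sym2.lift ⟨f, hs⟩)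
  have key2 : ∑ p ∈ Finset.univ.sym2.filter (fun p : Sym2 V => ¬ p.IsDiag), Sym2.lift ⟨f, hs⟩ p
      = ∑ i ∈ Finset.univ.offDiag.filter (fun i : V × V => i.1 < i.2),
          Sym2.lift ⟨f, hs⟩ s(i.1, i.2) := by
    convert key using 3 <;> (ext x; simp [Finset.mem_offDiag])
  rw [key2]
  have h2 : ∀ i : V × V, Sym2.lift ⟨f, hs⟩ s(i.1, i.2) = f i.1 i.2 := fun i => rfl
  simp only [h2]
  have h3 : ∑ u, ∑ v, f u v = ∑ i ∈ Finset.univ ×ˢ Finset.univ, f i.1 i.2 := by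
    rw [Finset.sum_product]
  rw [h3, ← Finset.diag_union_offDiag (Finset.univ : Finset V),
    Finset.sum_union (Finset.disjoint_diag_offDiag _)]
  have h4 : ∑ i ∈ (Finset.univ : Finset V).diag, f i.1 i.2 = 0 := by
    apply Finset.sum_eq_zero
    intro x hx
    rw [Finset.mem_diag] at hx
    rw [hx.2, hd]
  rw [h4, zero_add,
    ← Finset.sum_filter_add_sum_filter_not ((Finset.univ : Finset V).offDiag)
      (fun i => i.1 < i.2)]
  have h5 : ∑ i ∈ (Finset.univ : Finset V).offDiag.filter (fun i => ¬ i.1 < i.2), f i.1 i.2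
      = ∑ i ∈ (Finset.univ : Finset V).offDiag.filter (fun i => i.1 < i.2), f i.1 i.2 := by
    apply Finset.sum_nbij' (fun i => Prod.swap i) (fun i => Prod.swap i)
    · intro a ha
      simp only [Finset.mem_filter, Finset.mem_offDiag] at ha ⊢
      exact ⟨⟨Finset.mem_univ _, Finset.mem_univ _, (Ne.symm ha.1.2.2)⟩,
        lt_of_le_of_ne (not_lt.mp ha.2) (Ne.symm ha.1.2.2)⟩
    · intro a ha
      simp only [Finset.mem_filter, Finset.mem_offDiag] at ha ⊢
      exact ⟨⟨Finset.mem_univ _, Finset.mem_univ _, (Ne.symm ha.1.2.2)⟩, not_lt.mpr (le_of_lt ha.2)⟩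
    · intro a _; rfl
    · intro a _; rfl
    · intro a _; exact hs _ _
  rw [h5]; ring

/-- Graph automorphisms preserve distances (in a connected graph). -/
lemma iso_dist {V : Type*} (G : SimpleGraph V) (hG : G.Connected) (σ : G ≃g G) (u v : V) :
    G.dist (σ u) (σ v) = G.dist u v := by
  have key : ∀ (τ : G ≃g G) (a b : V), G.dist (τ a) (τ b) ≤ G.dist a b := by
    intro τ a b
    obtain ⟨p, hp⟩ := (hG a b).exists_walk_length_eq_dist
    calc G.dist (τ a) (τ b) ≤ (p.map τ.toHom).length := SimpleGraph.dist_le _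
      _ = G.dist a b := by rw [SimpleGraph.Walk.length_map, hp]
  refine le_antisymm (key σ u v) ?_
  have h := key σ.symm (σ u) (σ v)
  simpa using h

/-- The doubled Wiener index of an isometric induced subgraph equals the ordered double
sum of powers of `G`-distances over the vertex set. -/
lemma induced_double {V : Type*} [Fintype V] [DecidableEq V]
    (G : SimpleGraph V) (A : Finset V)
    (hiso : ∀ u v : (↑A : Set V), (G.induce (↑A : Set V)).dist u v = G.dist (u : V) (v : V))
    (l : ℕ) (hl : 1 ≤ l) :
    2 * wienerL (G.induce (↑A : Set V)) l = ∑ u ∈ A, ∑ v ∈ A, G.dist u v ^ l := by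
  have h := double_sum (V := (↑A : Set V))
      (fun u v => (G.induce (↑A : Set V)).dist u v ^ l)
      (fun u v => by simp [SimpleGraph.dist_comm])
      (fun u => by simp [SimpleGraph.dist_self, zero_pow (show l ≠ 0 by omega)])
  have h2 : 2 * wienerL (G.induce (↑A : Set V)) l
      = ∑ u : (↑A : Set V), ∑ v : (↑A : Set V), (G.induce (↑A : Set V)).dist u v ^ l := h
  rw [h2]
  have h3 : ∀ u : (↑A : Set V), ∑ v : (↑A : Set V), (G.induce (↑A : Set V)).dist u v ^ l
      = ∑ v : (↑A : Set V), G.dist (u : V) (v : V) ^ l := by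
    intro u
    exact Finset.sum_congr rfl fun v _ => by rw [hiso]
  simp only [h3]
  have hconv : ∀ g : V → ℕ, ∑ x : (↑A : Set V), g ↑x = ∑ x ∈ A, g x := fun g =>
    (Finset.sum_subtype A (fun x => Iff.rfl) g).symm
  have h4 : ∀ u : V, ∑ v : (↑A : Set V), G.dist u ↑v ^ l = ∑ v ∈ A, G.dist u v ^ l :=
    fun u => hconv (fun v => G.dist u v ^ l)
  simp only [h4]
  exact hconv (fun u => ∑ v ∈ A, G.dist u v ^ l)

/-- Let `σ` be an automorphism of a finite connected simple graph `G`
such that `F, σ(F), σ²(F), σ³(F), σ⁴(F)` partition the vertex set.  If the induced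
subgraphs `H₂ = ⟨F ∪ σ(F)⟩_G` and `H₃ = ⟨F ∪ σ(F) ∪ σ²(F)⟩_G` are connected and
isometric in `G`, then for every `λ ≥ 1`, `W_λ(G) = 5·(W_λ(H₃) − W_λ(H₂))`. -/
theorem stmt9 {V : Type*} [Fintype V] [DecidableEq V]
    (G : SimpleGraph V) (hG : G.Connected) (σ : G ≃g G) (F : Finset V)
    (hdisj : ∀ i j : Fin 5, i ≠ j →
      Disjoint (F.image ((⇑σ)^[(i : ℕ)])) (F.image ((⇑σ)^[(j : ℕ)])))
    (hcover : Finset.univ.biUnion (fun i : Fin 5 => F.image ((⇑σ)^[(i : ℕ)])) = Finset.univ)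
    (A₂ A₃ : Finset V)
    (hA₂ : A₂ = F ∪ F.image ⇑σ)
    (hA₃ : A₃ = F ∪ F.image ⇑σ ∪ F.image ((⇑σ)^[2]))
    (hconn₂ : (G.induce (↑A₂ : Set V)).Connected)
    (hconn₃ : (G.induce (↑A₃ : Set V)).Connected)
    (hiso₂ : ∀ u v : (↑A₂ : Set V), (G.induce (↑A₂ : Set V)).dist u v = G.dist (u : V) (v : V))
    (hiso₃ : ∀ u v : (↑A₃ : Set V), (G.induce (↑A₃ : Set V)).dist u v = G.dist (u : V) (v : V))
    (l : ℕ) (hl : 1 ≤ l) :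
    (wienerL G l : ℤ) =
      5 * ((wienerL (G.induce (↑A₃ : Set V)) l : ℤ) -
           (wienerL (G.induce (↑A₂ : Set V)) l : ℤ)) := by
  -- notation
  set f : V → V → ℕ := fun u v => G.dist u v ^ l with hf
  set B : ℕ → Finset V := fun i => F.image ((⇑σ)^[i]) with hB
  set S : ℕ → ℕ → ℕ := fun i j => ∑ u ∈ B i, ∑ v ∈ B j, f u v with hS
  have hinj : Function.Injective ⇑σ := EquivLike.injective σ
  have hfsym : ∀ u v, f u v = f v u := fun u v => by
    simp only [hf, SimpleGraph.dist_comm]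
  have hfσ : ∀ u v, f (σ u) (σ v) = f u v := fun u v => by
    simp only [hf, iso_dist G hG σ]
  have hB0 : B 0 = F := by simp [hB]
  have hB1 : B 1 = F.image ⇑σ := by simp [hB]
  have hBsucc : ∀ i, B (i + 1) = (B i).image ⇑σ := by
    intro i
    simp only [hB, Finset.image_image]
    congr 1
    exact Function.iterate_succ' (⇑σ) i
  have hShift : ∀ i j, S (i + 1) (j + 1) = S i j := by
    intro i j
    simp only [hS, hBsucc]
    rw [Finset.sum_image (fun x _ y _ h => hinj h)]
    refine Finset.sum_congr rfl fun u _ => ?_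
    rw [Finset.sum_image (fun x _ y _ h => hinj h)]
    exact Finset.sum_congr rfl fun v _ => hfσ u v
  have hd5 : ∀ i j : ℕ, i < 5 → j < 5 → i ≠ j → Disjoint (B i) (B j) := by
    intro i j hi hj hne
    have := hdisj ⟨i, hi⟩ ⟨j, hj⟩ (by simpa [Fin.ext_iff] using hne)
    simpa [hB] using this
  have hB5 : B 5 = B 0 := by
    have hcard : (B 5).card = (B 0).card := by
      simp only [hB, Finset.card_image_of_injective _ (hinj.iterate _)]
    have hdis5 : ∀ k : ℕ, 0 < k → k < 5 → Disjoint (B 5) (B k) := by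
      intro k hk0 hk5
      obtain ⟨m, rfl⟩ := Nat.exists_eq_succ_of_ne_zero (show k ≠ 0 by omega)
      rw [show B 5 = (B 4).image ⇑σ from by simpa using hBsucc 4, hBsucc m]
      exact (Finset.disjoint_image hinj).mpr (hd5 4 m (by omega) (by omega) (by omega))
    have hsub : B 5 ⊆ B 0 := by
      intro x hx
      have hxu : x ∈ Finset.univ.biUnion (fun i : Fin 5 => F.image ((⇑σ)^[(i : ℕ)])) := by
        rw [hcover]; exact Finset.mem_univ x
      obtain ⟨i, _, hxi⟩ := Finset.mem_biUnion.mp hxu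
      have hxi' : x ∈ B (i : ℕ) := by simpa [hB] using hxi
      rcases i with ⟨iv, hiv⟩
      interval_cases iv
      · exact hxi'
      · exact absurd (show x ∈ B 1 by simpa using hxi')
          (Finset.disjoint_left.mp (hdis5 1 (by omega) (by omega)) hx)
      · exact absurd (show x ∈ B 2 by simpa using hxi')
          (Finset.disjoint_left.mp (hdis5 2 (by omega) (by omega)) hx)
      · exact absurd (show x ∈ B 3 by simpa using hxi')
          (Finset.disjoint_left.mp (hdis5 3 (by omega) (by omega)) hx)
      · exact absurd (show x ∈ B 4 by simpa using hxi')
          (Finset.disjoint_left.mp (hdis5 4 (by omega) (by omega)) hx)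
    exact Finset.eq_of_subset_of_card_le hsub (le_of_eq hcard.symm)
  have hSsym : ∀ i j, S i j = S j i := by
    intro i j
    simp only [hS]
    rw [Finset.sum_comm]
    exact Finset.sum_congr rfl fun u _ => Finset.sum_congr rfl fun v _ => hfsym v u
  have hS5L : ∀ j, S 5 j = S 0 j := fun j => by simp only [hS, hB5]
  -- the 25 values
  have h11 : S 1 1 = S 0 0 := hShift 0 0
  have h22 : S 2 2 = S 0 0 := (hShift 1 1).trans h11
  have h33 : S 3 3 = S 0 0 := (hShift 2 2).trans h22
  have h44 : S 4 4 = S 0 0 := (hShift 3 3).trans h33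
  have h12 : S 1 2 = S 0 1 := hShift 0 1
  have h23 : S 2 3 = S 0 1 := (hShift 1 2).trans h12
  have h34 : S 3 4 = S 0 1 := (hShift 2 3).trans h23
  have h40 : S 4 0 = S 0 1 := (hShift 4 0).symm.trans (hS5L 1)
  have h10 : S 1 0 = S 0 1 := hSsym 1 0
  have h21 : S 2 1 = S 0 1 := (hSsym 2 1).trans h12
  have h32 : S 3 2 = S 0 1 := (hSsym 3 2).trans h23
  have h43 : S 4 3 = S 0 1 := (hSsym 4 3).trans h34
  have h04 : S 0 4 = S 0 1 := (hSsym 0 4).trans h40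
  have h13 : S 1 3 = S 0 2 := hShift 0 2
  have h24 : S 2 4 = S 0 2 := (hShift 1 3).trans h13
  have h41 : S 4 1 = S 0 2 := (hShift 4 1).symm.trans (hS5L 2)
  have h30 : S 3 0 = S 0 2 := (hShift 3 0).symm.trans h41
  have h20 : S 2 0 = S 0 2 := hSsym 2 0
  have h31 : S 3 1 = S 0 2 := (hSsym 3 1).trans h13
  have h42 : S 4 2 = S 0 2 := (hSsym 4 2).trans h24
  have h03 : S 0 3 = S 0 2 := (hSsym 0 3).trans h30
  have h14 : S 1 4 = S 0 2 := (hShift 0 3).trans h03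
  -- partition of the total double sum
  have hpd : ((Finset.univ : Finset (Fin 5)) : Set (Fin 5)).PairwiseDisjoint
      (fun i : Fin 5 => B (i : ℕ)) := by
    intro i _ j _ hne
    simpa [hB, Function.onFun] using hd5 i j i.isLt j.isLt (by simpa [Fin.ext_iff] using hne)
  have hsum1 : ∀ g : V → ℕ, ∑ v, g v = ∑ j : Fin 5, ∑ v ∈ B (j : ℕ), g v := by
    intro g
    conv_lhs => rw [← hcover]
    rw [Finset.sum_biUnion hpd]
  have htot : ∑ u, ∑ v, f u v = ∑ i : Fin 5, ∑ j : Fin 5, S (i : ℕ) (j : ℕ) := by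
    rw [hsum1 (fun u => ∑ v, f u v)]
    refine Finset.sum_congr rfl fun i _ => ?_
    rw [Finset.sum_congr rfl fun u _ => hsum1 (fun v => f u v), Finset.sum_comm]
  have etot : 2 * wienerL G l
      = ∑ i : Fin 5, ∑ j : Fin 5, S (i : ℕ) (j : ℕ) := by
    rw [← htot]
    exact double_sum f hfsym (fun u => by
      simp only [hf, SimpleGraph.dist_self, zero_pow (by omega : l ≠ 0)])
  have etot' : 2 * wienerL G l = 5 * S 0 0 + 10 * S 0 1 + 10 * S 0 2 := by
    rw [etot, Fin.sum_univ_five]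
    simp only [Fin.sum_univ_five, Fin.isValue,
      show ((0 : Fin 5) : ℕ) = 0 from rfl, show ((1 : Fin 5) : ℕ) = 1 from rfl,
      show ((2 : Fin 5) : ℕ) = 2 from rfl, show ((3 : Fin 5) : ℕ) = 3 from rfl,
      show ((4 : Fin 5) : ℕ) = 4 from rfl]
    rw [h11, h22, h33, h44, h12, h23, h34, h40, h10, h21, h32, h43, h04,
      h13, h24, h41, h30, h20, h31, h42, h03, h14]
    ring
  -- A₂
  have hA₂' : A₂ = B 0 ∪ B 1 := by rw [hA₂, hB0, hB1]
  have hA₂d : Disjoint (B 0) (B 1) := hd5 0 1 (by omega) (by omega) (by omega)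
  have e2 : 2 * wienerL (G.induce (↑A₂ : Set V)) l = 2 * S 0 0 + 2 * S 0 1 := by
    rw [induced_double G A₂ hiso₂ l hl]
    have : ∑ u ∈ A₂, ∑ v ∈ A₂, G.dist u v ^ l = ∑ u ∈ A₂, ∑ v ∈ A₂, f u v := rfl
    rw [this, hA₂']
    rw [Finset.sum_congr rfl (fun u (_ : u ∈ B 0 ∪ B 1) => Finset.sum_union hA₂d)]
    rw [Finset.sum_union hA₂d]
    simp only [Finset.sum_add_distrib]
    simp only [hS] at h10 h11 ⊢
    omega
  -- A₃
  have hB2 : B 2 = F.image ((⇑σ)^[2]) := rfl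
  have hA₃' : A₃ = B 0 ∪ B 1 ∪ B 2 := by rw [hA₃, hB0, hB1, hB2]
  have hA₃d : Disjoint (B 0 ∪ B 1) (B 2) :=
    Finset.disjoint_union_left.mpr
      ⟨hd5 0 2 (by omega) (by omega) (by omega), hd5 1 2 (by omega) (by omega) (by omega)⟩
  have e3 : 2 * wienerL (G.induce (↑A₃ : Set V)) l
      = 3 * S 0 0 + 4 * S 0 1 + 2 * S 0 2 := by
    rw [induced_double G A₃ hiso₃ l hl]
    have : ∑ u ∈ A₃, ∑ v ∈ A₃, G.dist u v ^ l = ∑ u ∈ A₃, ∑ v ∈ A₃, f u v := rfl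
    rw [this, hA₃']
    rw [Finset.sum_congr rfl (fun u (_ : u ∈ B 0 ∪ B 1 ∪ B 2) => by
          rw [Finset.sum_union hA₃d, Finset.sum_union hA₂d])]
    rw [Finset.sum_union hA₃d, Finset.sum_union hA₂d]
    simp only [Finset.sum_add_distrib]
    simp only [hS] at h10 h11 h12 h20 h21 h22 ⊢
    omega
  omega
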